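/- Let A, B be 2×2 complex matrices with A² = 0, AB = 0, and exp(B) = id + B. Then exp(tA + B) = exp(tA)·exp(B) for all t ∈ ℂ, provided exp(tA + B) = id + tA + B; in particular for A = [[0,1],[0,0]], B = [[u,0],[0,0]] with e^u = 1 + u, the identity exp(tA + B) = id + tA + B holds for all t ∈ ℂ. -/

import Mathlib

open Matrix NormedSpace

theorem key_exp_lemma (M : Matrix (Fin 2) (Fin 2) ℂ) (u : ℂ) (hM : M ^ 2 = u • M)
    (hu : Complex.exp u = 1 + u) : exp M = 1 + M := by
  letI : SeminormedRing (Matrix (Fin 2) (Fin 2) ℂ) := Matrix.linftyOpSemiNormedRing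
  letI : NormedRing (Matrix (Fin 2) (Fin 2) ℂ) := Matrix.linftyOpNormedRing
  letI : NormedAlgebra ℂ (Matrix (Fin 2) (Fin 2) ℂ) := Matrix.linftyOpNormedAlgebra
  have hpow : ∀ n : ℕ, M ^ (n + 1) = u ^ n • M := by
    intro n
    induction n with
    | zero => simp
    | succ n ih =>
      rw [pow_succ, ih, smul_mul_assoc, ← pow_two, hM, smul_smul, pow_succ]
  rw [exp_eq_tsum (𝕂 := ℂ)]
  beta_reduce
  erw [Summable.tsum_eq_zero_add (expSeries_summable' (𝕂 := ℂ) M)]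
  simp only [pow_zero, Nat.factorial_zero, Nat.cast_one, inv_one, one_smul, hpow, smul_smul]
  have hsum : Summable fun n : ℕ => ((Nat.factorial (n+1) : ℂ))⁻¹ * u ^ n := by
    apply Summable.of_norm_bounded (g := fun n : ℕ => ‖((Nat.factorial n : ℂ))⁻¹ • u ^ n‖)
      (norm_expSeries_summable' (𝕂 := ℂ) u)
    intro n
    simp only [norm_mul, norm_smul, norm_inv, Complex.norm_natCast]
    have h1 : ((Nat.factorial (n+1) : ℝ))⁻¹ ≤ ((Nat.factorial n : ℝ))⁻¹ := by
      apply inv_anti₀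
      · exact_mod_cast Nat.factorial_pos n
      · exact_mod_cast Nat.factorial_le (Nat.le_succ n)
    exact mul_le_mul_of_nonneg_right h1 (norm_nonneg _)
  rw [Summable.tsum_smul_const hsum]
  have hc : (∑' n : ℕ, ((Nat.factorial (n+1) : ℂ))⁻¹ * u ^ n) = 1 := by
    rcases eq_or_ne u 0 with rfl | hu0
    · rw [tsum_eq_single 0]
      · simp
      · intro n hn; simp [zero_pow hn]
    · have h2 : u * ∑' n : ℕ, ((Nat.factorial (n+1) : ℂ))⁻¹ * u ^ n
          = ∑' n : ℕ, ((Nat.factorial (n+1) : ℂ))⁻¹ * u ^ (n + 1) := by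
        rw [← tsum_mul_left]
        congr 1; ext n; ring
      have h3 : Complex.exp u = 1 + ∑' n : ℕ, ((Nat.factorial (n+1) : ℂ))⁻¹ * u ^ (n + 1) := by
        rw [Complex.exp_eq_exp_ℂ, exp_eq_tsum (𝕂 := ℂ)]
        beta_reduce
        rw [Summable.tsum_eq_zero_add (expSeries_summable' (𝕂 := ℂ) u)]
        simp [smul_eq_mul]
      rw [hu] at h3
      have h4 : u * ∑' n : ℕ, ((Nat.factorial (n+1) : ℂ))⁻¹ * u ^ n = u * 1 := by
        rw [h2, mul_one]; linear_combination -h3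
      exact mul_left_cancel₀ hu0 h4
  rw [hc, one_smul]

theorem stmt_12 (A B : Matrix (Fin 2) (Fin 2) ℂ)
    (hA : A ^ 2 = 0) (hAB : A * B = 0) (hB : exp B = 1 + B) :
    ((∀ t : ℂ, exp (t • A + B) = 1 + t • A + B) →
      ∀ t : ℂ, exp (t • A + B) = exp (t • A) * exp B) ∧
    (∀ u : ℂ, Complex.exp u = 1 + u → ∀ t : ℂ,
      exp (t • (!![0, 1; 0, 0] : Matrix (Fin 2) (Fin 2) ℂ) + !![u, 0; 0, 0]) =
        1 + t • (!![0, 1; 0, 0] : Matrix (Fin 2) (Fin 2) ℂ) + !![u, 0; 0, 0]) := by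
  constructor
  · intro h t
    have htA : exp (t • A) = 1 + t • A := by
      apply key_exp_lemma _ 0
      · rw [smul_pow, hA, smul_zero, zero_smul]
      · simp
    have hzero : (t • A) * B = 0 := by rw [smul_mul_assoc, hAB, smul_zero]
    rw [h t, htA, hB, add_mul, one_mul, mul_add, mul_one, hzero, add_zero]
    abel
  · intro u hu t
    have hMeq : (t • (!![0, 1; 0, 0] : Matrix (Fin 2) (Fin 2) ℂ) + !![u, 0; 0, 0])
        = !![u, t; 0, 0] := by
      ext i j; fin_cases i <;> fin_cases j <;> simp
    have hM2 : (!![u, t; 0, 0] : Matrix (Fin 2) (Fin 2) ℂ) ^ 2 = u • !![u, t; 0, 0] := by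
      rw [pow_two]
      ext i j; fin_cases i <;> fin_cases j <;> simp [Matrix.mul_apply, Fin.sum_univ_two]
    rw [hMeq, key_exp_lemma _ u hM2 hu, add_assoc, hMeq]
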